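/- There are order isomorphisms I_even ×ₗ ℕ ≅ I_odd, I_odd ×ₗ ℕ ≅ I_even, and I ×ₗ ℕ ≅ I, where ℕ carries its usual order. Consequently each of I_even, I_odd, I is invariant under right multiplication by ω²: I_even ×ₗ (ℕ ×ₗ ℕ) ≅ I_even, I_odd ×ₗ (ℕ ×ₗ ℕ) ≅ I_odd, and I ×ₗ (ℕ ×ₗ ℕ) ≅ I. -/

import Mathlib

open Ordinal

/-- Exponent of the `j`-th term (from the right, counting from `j = 0`) of `L i`. -/
def e (i : ℤ) (j : ℕ) : ℕ := ((j : ℤ) + 1 + max i 0).toNat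

/-- Coefficient of the `j`-th term (from the right, counting from `j = 0`) of `L i`. -/
def c (i : ℤ) (j : ℕ) : ℕ := ((j : ℤ) + 1 + max (-i) 0).toNat

/-- The order `L i = … + c₂·ω^{e₂} + c₁·ω^{e₁} + c₀·ω^{e₀} + ω^ω`: an
`ω*`-indexed sum of ordinals followed on the right by a copy of `ω^ω`. -/
abbrev L (i : ℤ) : Type :=
  ((Lex (Σ j : ℕ, (Ordinal.ToType (ω ^ (e i j) * (c i j)))ᵒᵈ))ᵒᵈ) ⊕ₗ Ordinal.ToType (ω ^ ω)

/-- `I_even = … + L₋₂ + L₀ + L₂ + …` -/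
abbrev Ieven : Type := Lex (Σ k : ℤ, L (2 * k))

/-- `I_odd = … + L₋₁ + L₁ + L₃ + …` -/
abbrev Iodd : Type := Lex (Σ k : ℤ, L (2 * k + 1))

/-- `I = … + L₋₁ + L₀ + L₁ + …` -/
abbrev I : Type := Lex (Σ k : ℤ, L k)

/-- `I_even ×ₗ ω ≅ I_odd`, `I_odd ×ₗ ω ≅ I_even` and `I ×ₗ ω ≅ I`;
consequently each of the three orders is invariant under right multiplication
by `ω²`. -/
instance (priority := 10000) instIsWellOrderToType (o : Ordinal) :
    IsWellOrder o.ToType (· < ·) := isWellOrder_lt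

instance (priority := 10000) instIsWellOrderNat : IsWellOrder ℕ (· < ·) := isWellOrder_lt

section Toolkit
variable {X Y Z X' Y' : Type*}

/-- Distribute a lex product over a lex sum. -/
noncomputable def prodLexSumLex [LinearOrder X] [LinearOrder Y] [LinearOrder Z] :
    Lex ((X ⊕ₗ Y) × Z) ≃o (Lex (X × Z) ⊕ₗ Lex (Y × Z)) := by
  refine StrictMono.orderIsoOfSurjective
    (fun p => Sum.elim (fun x => toLex (Sum.inl (toLex (x, p.2))))
      (fun y => toLex (Sum.inr (toLex (y, p.2)))) (ofLex p.1)) ?_ ?_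
  · intro p q h
    obtain ⟨a, z⟩ := p; obtain ⟨b, w⟩ := q
    obtain x | y := a <;> obtain x' | y' := b <;>
      rcases Prod.Lex.lt_iff.1 h with h | ⟨h1, h2⟩ <;>
      try cases h1
    all_goals try rcases Sum.Lex.lt_def.1 h with ⟨h⟩ | ⟨h⟩ | ⟨_, _⟩
    · exact Sum.Lex.inl (Prod.Lex.left _ _ h)
    · exact Sum.Lex.inl (Prod.Lex.right _ h2)
    · exact Sum.Lex.sep _ _
    · exact Sum.Lex.inr (Prod.Lex.left _ _ h)
    · exact Sum.Lex.inr (Prod.Lex.right _ h2)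
  · rintro ((⟨x, z⟩) | (⟨y, z⟩))
    · exact ⟨toLex (toLex (Sum.inl x), z), rfl⟩
    · exact ⟨toLex (toLex (Sum.inr y), z), rfl⟩

/-- Distribute a lex product over a lex sigma. -/
noncomputable def prodLexSigmaLex {κ : Type*} [LinearOrder κ] {A : κ → Type*}
    [∀ k, LinearOrder (A k)] [LinearOrder Y] :
    Lex ((Σₗ k, A k) × Y) ≃o Σₗ k, Lex (A k × Y) := by
  refine StrictMono.orderIsoOfSurjective
    (fun p => ⟨p.1.1, toLex (p.1.2, p.2)⟩) ?_ ?_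
  · intro p q h
    obtain ⟨⟨k, a⟩, z⟩ := p; obtain ⟨⟨l, b⟩, w⟩ := q
    rcases Prod.Lex.lt_iff.1 h with h | ⟨h1, h2⟩
    · rcases Sigma.Lex.lt_def.1 h with h'' | ⟨h1', h2'⟩
      · exact Sigma.Lex.left _ _ h''
      · obtain rfl : k = l := h1'
        exact Sigma.Lex.right _ _ (Prod.Lex.left _ _ h2')
    · have h1' : (⟨k, a⟩ : Sigma A) = ⟨l, b⟩ := h1
      cases h1'
      exact Sigma.Lex.right _ _ (Prod.Lex.right _ h2)
  · rintro ⟨k, ⟨a, y⟩⟩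
    exact ⟨toLex (⟨k, a⟩, y), rfl⟩

/-- Lex product with both factors dualized. -/
noncomputable def prodLexDualDual [LinearOrder X] [LinearOrder Y] :
    Lex (Xᵒᵈ × Yᵒᵈ) ≃o (Lex (X × Y))ᵒᵈ := by
  refine StrictMono.orderIsoOfSurjective
    (fun p => OrderDual.toDual (toLex (OrderDual.ofDual p.1, OrderDual.ofDual p.2))) ?_ ?_
  · intro p q h
    obtain ⟨x, y⟩ := p; obtain ⟨x', y'⟩ := q
    rcases Prod.Lex.lt_iff.1 h with h | ⟨h1, h2⟩
    · exact Prod.Lex.left _ _ h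
    · cases h1
      exact Prod.Lex.right _ h2
  · intro p
    exact ⟨toLex (OrderDual.toDual (ofLex (OrderDual.ofDual p)).1,
      OrderDual.toDual (ofLex (OrderDual.ofDual p)).2), rfl⟩

/-- Lex product with dualized first factor. -/
noncomputable def prodLexDualLeft [LinearOrder X] [LinearOrder Y] :
    Lex (Xᵒᵈ × Y) ≃o (Lex (X × Yᵒᵈ))ᵒᵈ := by
  refine StrictMono.orderIsoOfSurjective
    (fun p => OrderDual.toDual (toLex (OrderDual.ofDual p.1, OrderDual.toDual p.2))) ?_ ?_
  · intro p q h
    obtain ⟨x, y⟩ := p; obtain ⟨x', y'⟩ := q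
    rcases Prod.Lex.lt_iff.1 h with h | ⟨h1, h2⟩
    · exact Prod.Lex.left _ _ h
    · cases h1
      exact Prod.Lex.right _ h2
  · intro p
    exact ⟨toLex (OrderDual.toDual (ofLex (OrderDual.ofDual p)).1,
      OrderDual.ofDual (ofLex (OrderDual.ofDual p)).2), rfl⟩

/-- Congruence for lex products. -/
noncomputable def prodLexCongr [LinearOrder X] [LinearOrder Y] [LinearOrder X'] [LinearOrder Y']
    (f : X ≃o X') (g : Y ≃o Y') : Lex (X × Y) ≃o Lex (X' × Y') := by
  refine StrictMono.orderIsoOfSurjective (fun p => toLex (f p.1, g p.2)) ?_ ?_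
  · intro p q h
    obtain ⟨x, y⟩ := p; obtain ⟨x', y'⟩ := q
    rcases Prod.Lex.lt_iff.1 h with h | ⟨h1, h2⟩
    · exact Prod.Lex.left _ _ (f.lt_iff_lt.2 h)
    · cases h1
      exact Prod.Lex.right _ (g.lt_iff_lt.2 h2)
  · rintro ⟨x, y⟩
    refine ⟨toLex (f.symm x, g.symm y), ?_⟩
    show toLex (f (f.symm x), g (g.symm y)) = toLex (x, y)
    rw [f.apply_symm_apply, g.apply_symm_apply]

/-- Associativity of the lex product. -/
noncomputable def prodLexAssoc [LinearOrder X] [LinearOrder Y] [LinearOrder Z] :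
    Lex (Lex (X × Y) × Z) ≃o Lex (X × Lex (Y × Z)) := by
  refine StrictMono.orderIsoOfSurjective
    (fun p => toLex (p.1.1, toLex (p.1.2, p.2))) ?_ ?_
  · intro p q h
    obtain ⟨⟨x, y⟩, z⟩ := p; obtain ⟨⟨x', y'⟩, z'⟩ := q
    rcases Prod.Lex.lt_iff.1 h with h | ⟨h1, h2⟩
    · rcases Prod.Lex.lt_iff.1 h with h | ⟨h1, h2⟩
      · exact Prod.Lex.left _ _ h
      · cases h1
        exact Prod.Lex.right _ (Prod.Lex.left _ _ h2)
    · cases h1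
      exact Prod.Lex.right _ (Prod.Lex.right _ h2)
  · rintro ⟨x, ⟨y, z⟩⟩
    exact ⟨toLex (toLex (x, y), z), rfl⟩

/-- Congruence for lex sums. -/
noncomputable def sumLexCongr [LinearOrder X] [LinearOrder Y] [LinearOrder X'] [LinearOrder Y']
    (f : X ≃o X') (g : Y ≃o Y') : (X ⊕ₗ Y) ≃o (X' ⊕ₗ Y') := by
  refine StrictMono.orderIsoOfSurjective
    (fun p => Sum.elim (fun x => toLex (Sum.inl (f x))) (fun y => toLex (Sum.inr (g y)))
      (ofLex p)) ?_ ?_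
  · intro p q h
    obtain x | y := p <;> obtain x' | y' := q <;>
      rcases Sum.Lex.lt_def.1 h with ⟨h⟩ | ⟨h⟩ | ⟨_, _⟩
    · exact Sum.Lex.inl (f.lt_iff_lt.2 h)
    · exact Sum.Lex.sep _ _
    · exact Sum.Lex.inr (g.lt_iff_lt.2 h)
  · intro p
    obtain x | y := p
    · refine ⟨toLex (Sum.inl (f.symm x)), ?_⟩
      show toLex (Sum.inl (f (f.symm x))) = _
      rw [f.apply_symm_apply]; rfl
    · refine ⟨toLex (Sum.inr (g.symm y)), ?_⟩
      show toLex (Sum.inr (g (g.symm y))) = _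
      rw [g.apply_symm_apply]; rfl

/-- Congruence for lex sigma types. -/
noncomputable def sigmaLexCongr {κ κ' : Type*} [LinearOrder κ] [LinearOrder κ']
    {A : κ → Type*} {A' : κ' → Type*} [∀ k, LinearOrder (A k)] [∀ k, LinearOrder (A' k)]
    (φ : κ ≃o κ') (g : ∀ k, A k ≃o A' (φ k)) :
    (Σₗ k, A k) ≃o (Σₗ k', A' k') := by
  refine StrictMono.orderIsoOfSurjective (fun p => ⟨φ p.1, g p.1 p.2⟩) ?_ ?_
  · intro p q h
    obtain ⟨k, a⟩ := p; obtain ⟨l, b⟩ := q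
    rcases Sigma.Lex.lt_def.1 h with h | ⟨h1, h2⟩
    · exact Sigma.Lex.left _ _ (φ.lt_iff_lt.2 h)
    · obtain rfl : k = l := h1
      exact Sigma.Lex.right _ _ ((g _).lt_iff_lt.2 h2)
  · rintro ⟨k', b⟩
    obtain ⟨k, rfl⟩ := φ.surjective k'
    exact ⟨⟨k, (g k).symm b⟩, by simp; rfl⟩

/-- Congruence for lex sigma types, fixed base. -/
noncomputable def sigmaLexCongrRight {κ : Type*} [LinearOrder κ]
    {A A' : κ → Type*} [∀ k, LinearOrder (A k)] [∀ k, LinearOrder (A' k)]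
    (g : ∀ k, A k ≃o A' k) : (Σₗ k, A k) ≃o (Σₗ k, A' k) :=
  sigmaLexCongr (OrderIso.refl κ) g

/-- Peel off the first summand of a lex sigma over `ℕ`. -/
noncomputable def natSigmaDecomp {B : ℕ → Type*} [∀ j, LinearOrder (B j)] :
    (Σₗ j, B j) ≃o (B 0 ⊕ₗ Σₗ j, B (j + 1)) := by
  refine StrictMono.orderIsoOfSurjective
    (fun p => Nat.rec (motive := fun n => B n → (B 0 ⊕ₗ Σₗ j, B (j + 1)))
      (fun b => toLex (Sum.inl b)) (fun j _ b => toLex (Sum.inr ⟨j, b⟩)) p.1 p.2) ?_ ?_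
  · intro p q h
    obtain ⟨j, a⟩ := p; obtain ⟨l, b⟩ := q
    rcases Sigma.Lex.lt_def.1 h with h | ⟨h1, h2⟩
    · have hjl : j < l := h
      obtain _ | j := j <;> obtain _ | l := l
      · exact absurd hjl (by omega)
      · exact Sum.Lex.sep _ _
      · exact absurd hjl (by omega)
      · exact Sum.Lex.inr (Sigma.Lex.left _ _ (by omega))
    · obtain rfl : j = l := h1
      obtain _ | j := j
      · exact Sum.Lex.inl h2
      · exact Sum.Lex.inr (Sigma.Lex.right _ _ h2)
  · intro p
    obtain b | ⟨j, b⟩ := p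
    · exact ⟨⟨0, b⟩, rfl⟩
    · exact ⟨⟨j + 1, b⟩, rfl⟩

/-- Order isomorphism between `ToType`s of equal ordinals. -/
noncomputable def ToTypeCongr {a b : Ordinal} (h : a = b) : a.ToType ≃o b.ToType := by
  subst h; exact OrderIso.refl _

/-- `ToType a ⊕ₗ ToType b ≃o ToType (a + b)`. -/
noncomputable def ToTypeAdd (a b : Ordinal.{0}) :
    (a.ToType ⊕ₗ b.ToType) ≃o (a + b).ToType :=
  OrderIso.ofRelIsoLT <|
    RelIso.trans
      (RelIso.symm (⟨toLex, fun {x y} => Iff.symm Sum.Lex.lt_def⟩ :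
        (Sum.Lex ((· < ·) : a.ToType → a.ToType → Prop)
            ((· < ·) : b.ToType → b.ToType → Prop)) ≃r
          ((· < ·) : (a.ToType ⊕ₗ b.ToType) → (a.ToType ⊕ₗ b.ToType) → Prop)))
      (Classical.choice (Ordinal.type_eq.1
        (by rw [type_sum_lex, type_toType, type_toType, type_toType])))

/-- `Lex (ToType a × ℕ) ≃o ToType (ω * a)`. -/
noncomputable def prodLexNatToType (a : Ordinal.{0}) :
    Lex (a.ToType × ℕ) ≃o (ω * a).ToType :=
  OrderIso.ofRelIsoLT <|
    RelIso.trans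
      (RelIso.symm (⟨toLex, fun {x y} => (Prod.Lex.lt_iff (x := x) (y := y)).trans Prod.lex_def.symm⟩ :
        (Prod.Lex ((· < ·) : a.ToType → a.ToType → Prop) ((· < ·) : ℕ → ℕ → Prop)) ≃r
          ((· < ·) : Lex (a.ToType × ℕ) → Lex (a.ToType × ℕ) → Prop)))
      (Classical.choice (Ordinal.type_eq.1
        (by rw [type_prod_lex, type_nat_lt, type_toType, type_toType])))

end Toolkit

section Arith

theorem omega_mul_pow (e' c' : ℕ) :
    ω * (ω ^ e' * (c' : Ordinal)) = ω ^ (e' + 1) * (c' : Ordinal) := by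
  rw [← mul_assoc, ← pow_succ']

theorem omega_mul_opow_omega : ω * ω ^ (ω : Ordinal) = ω ^ (ω : Ordinal) := by
  calc ω * ω ^ (ω : Ordinal) = ω ^ (1 : Ordinal) * ω ^ (ω : Ordinal) := by rw [opow_one]
    _ = ω ^ (1 + ω : Ordinal) := (opow_add _ _ _).symm
    _ = ω ^ (ω : Ordinal) := by rw [one_add_omega0]

theorem absorb (n : ℕ) :
    (ω ^ (1 : ℕ) * (n : Ordinal)) + ω ^ (ω : Ordinal) = ω ^ (ω : Ordinal) := by
  refine add_absorp (b := 2) ?_ ?_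
  · have h1 : (ω ^ (1 : ℕ) * (n : Ordinal)) < ω * ω := by
      rw [pow_one]
      exact (mul_lt_mul_iff_right₀ omega0_pos).2 (nat_lt_omega0 n)
    have h2 : (ω : Ordinal) * ω = ω ^ (2 : Ordinal) := by
      rw [show ((2 : Ordinal) = ((2 : ℕ) : Ordinal)) by norm_num, opow_natCast, pow_two]
    rwa [h2] at h1
  · refine opow_le_opow_right omega0_pos ?_
    rw [show ((2 : Ordinal) = ((2 : ℕ) : Ordinal)) by norm_num]
    exact (nat_lt_omega0 2).le

theorem e_succ {i : ℤ} (h : 0 ≤ i) (j : ℕ) : e (i + 1) j = e i j + 1 := by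
  unfold e; omega

theorem c_succ {i : ℤ} (h : 0 ≤ i) (j : ℕ) : c (i + 1) j = c i j := by
  unfold c; omega

theorem e_neg {i : ℤ} (h : i < 0) (j : ℕ) : e (i + 1) (j + 1) = e i j + 1 := by
  unfold e; omega

theorem c_neg {i : ℤ} (h : i < 0) (j : ℕ) : c (i + 1) (j + 1) = c i j := by
  unfold c; omega

theorem e_neg0 {i : ℤ} (h : i < 0) : e (i + 1) 0 = 1 := by
  unfold e; omega

end Arith

/-- `L` respects equality of indices. -/
noncomputable def LCongr {i i' : ℤ} (h : i = i') : L i ≃o L i' := by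
  subst h; exact OrderIso.refl _

/-- The key isomorphism: `Lex (L i × ℕ) ≃o L (i + 1)`. -/
noncomputable def keyIso (i : ℤ) : Lex (L i × ℕ) ≃o L (i + 1) := by
  have stepQ : Lex ((Ordinal.ToType (ω ^ ω)) × ℕ) ≃o Ordinal.ToType (ω ^ ω) :=
    (prodLexNatToType _).trans (ToTypeCongr omega_mul_opow_omega)
  have inner : Lex ((Lex (Σ j : ℕ, (Ordinal.ToType (ω ^ (e i j) * (c i j)))ᵒᵈ)) × ℕᵒᵈ) ≃o
      Σₗ j : ℕ, (Ordinal.ToType (ω * (ω ^ (e i j) * (c i j))))ᵒᵈ :=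
    prodLexSigmaLex.trans (sigmaLexCongrRight fun j =>
      prodLexDualDual.trans (prodLexNatToType _).dual)
  have stepP : Lex (((Lex (Σ j : ℕ, (Ordinal.ToType (ω ^ (e i j) * (c i j)))ᵒᵈ))ᵒᵈ) × ℕ) ≃o
      (Σₗ j : ℕ, (Ordinal.ToType (ω * (ω ^ (e i j) * (c i j))))ᵒᵈ)ᵒᵈ :=
    prodLexDualLeft.trans inner.dual
  have base : Lex (L i × ℕ) ≃o
      ((Σₗ j : ℕ, (Ordinal.ToType (ω * (ω ^ (e i j) * (c i j))))ᵒᵈ)ᵒᵈ ⊕ₗ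
        Ordinal.ToType (ω ^ ω)) :=
    prodLexSumLex.trans (sumLexCongr stepP stepQ)
  by_cases h : 0 ≤ i
  · -- easy case: term-by-term identification
    have eq1 : ∀ j : ℕ, ω * (ω ^ (e i j) * (c i j : Ordinal)) =
        ω ^ (e (i + 1) j) * (c (i + 1) j : Ordinal) := fun j => by
      rw [omega_mul_pow, e_succ h, c_succ h]
    exact base.trans (sumLexCongr
      ((sigmaLexCongrRight fun j => (ToTypeCongr (eq1 j)).dual).dual) (OrderIso.refl _))
  · -- shift case
    replace h : i < 0 := by omega
    have eq1 : ∀ j : ℕ, ω * (ω ^ (e i j) * (c i j : Ordinal)) =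
        ω ^ (e (i + 1) (j + 1)) * (c (i + 1) (j + 1) : Ordinal) := fun j => by
      rw [omega_mul_pow, e_neg h, c_neg h]
    have iso2 : (Σₗ j : ℕ, (Ordinal.ToType (ω * (ω ^ (e i j) * (c i j))))ᵒᵈ)ᵒᵈ ≃o
        (Σₗ j : ℕ, (Ordinal.ToType (ω ^ (e (i + 1) (j + 1)) * (c (i + 1) (j + 1))))ᵒᵈ)ᵒᵈ :=
      (sigmaLexCongrRight fun j => (ToTypeCongr (eq1 j)).dual).dual
    -- decompose the target L (i + 1)
    have d1 : (Σₗ j : ℕ, (Ordinal.ToType (ω ^ (e (i + 1) j) * (c (i + 1) j)))ᵒᵈ) ≃o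
        ((Ordinal.ToType (ω ^ (e (i + 1) 0) * (c (i + 1) 0)))ᵒᵈ ⊕ₗ
          Σₗ j : ℕ, (Ordinal.ToType (ω ^ (e (i + 1) (j + 1)) * (c (i + 1) (j + 1))))ᵒᵈ) :=
      natSigmaDecomp
    have d2 := (d1.dual.trans (OrderIso.sumLexDualAntidistrib _ _)).trans
      (sumLexCongr (OrderIso.refl _) (OrderIso.dualDual _).symm)
    -- d2 : (Σₗ ...)ᵒᵈ ≃o ((Σₗ shifted)ᵒᵈ ⊕ₗ ToType (t 0))
    have ht0 : (ω ^ (e (i + 1) 0) * ((c (i + 1) 0 : ℕ) : Ordinal)) + ω ^ (ω : Ordinal) =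
        ω ^ (ω : Ordinal) := by
      rw [e_neg0 h]; exact absorb _
    have targetIso : L (i + 1) ≃o
        ((Σₗ j : ℕ, (Ordinal.ToType (ω ^ (e (i + 1) (j + 1)) * (c (i + 1) (j + 1))))ᵒᵈ)ᵒᵈ ⊕ₗ
          Ordinal.ToType (ω ^ ω)) :=
      (sumLexCongr d2 (OrderIso.refl _)).trans
        ((OrderIso.sumLexAssoc _ _ _).trans
          (sumLexCongr (OrderIso.refl _) ((ToTypeAdd _ _).trans (ToTypeCongr ht0))))
    exact (base.trans (sumLexCongr iso2 (OrderIso.refl _))).trans targetIso.symm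

/-- Multiplying a `ℤ`-indexed sum of `L (f k)`s by `ω` shifts every index by one. -/
noncomputable def sumIso (f : ℤ → ℤ) :
    Lex ((Σₗ k : ℤ, L (f k)) × ℕ) ≃o Σₗ k : ℤ, L (f k + 1) :=
  prodLexSigmaLex.trans (sigmaLexCongrRight fun k => keyIso (f k))

noncomputable def isoEvenOdd : Lex (Ieven × ℕ) ≃o Iodd := sumIso fun k => 2 * k

noncomputable def isoOddEven : Lex (Iodd × ℕ) ≃o Ieven :=
  (sumIso fun k => 2 * k + 1).trans
    (sigmaLexCongr (OrderIso.addRight (1 : ℤ)) fun k =>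
      LCongr (by rw [OrderIso.addRight_apply]; ring))

noncomputable def isoII : Lex (I × ℕ) ≃o I :=
  (sumIso id).trans
    (sigmaLexCongr (OrderIso.addRight (1 : ℤ)) fun k =>
      LCongr (by rw [OrderIso.addRight_apply]; rfl))

/-- Composition giving invariance under multiplication by `ω²`. -/
noncomputable def omegaSqIso {X Y Z : Type} [LinearOrder X] [LinearOrder Y] [LinearOrder Z]
    (F : Lex (X × ℕ) ≃o Y) (G : Lex (Y × ℕ) ≃o Z) :
    Lex (X × Lex (ℕ × ℕ)) ≃o Z :=
  prodLexAssoc.symm.trans ((prodLexCongr F (OrderIso.refl ℕ)).trans G)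


theorem Ieven_Iodd_I_mul_omega :
    Nonempty (Lex (Ieven × ℕ) ≃o Iodd) ∧
    Nonempty (Lex (Iodd × ℕ) ≃o Ieven) ∧
    Nonempty (Lex (I × ℕ) ≃o I) ∧
    Nonempty (Lex (Ieven × Lex (ℕ × ℕ)) ≃o Ieven) ∧
    Nonempty (Lex (Iodd × Lex (ℕ × ℕ)) ≃o Iodd) ∧
    Nonempty (Lex (I × Lex (ℕ × ℕ)) ≃o I) := by
  exact ⟨⟨isoEvenOdd⟩, ⟨isoOddEven⟩, ⟨isoII⟩, ⟨omegaSqIso isoEvenOdd isoOddEven⟩,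
    ⟨omegaSqIso isoOddEven isoEvenOdd⟩, ⟨omegaSqIso isoII isoII⟩⟩
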